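/- Let N be a locally Hermitian symmetric space and u : S¹ × (0,T) → N a smooth solution of the Schrödinger-Airy flow u_t = α J∇_x u_x + β(∇_x² u_x + (1/2) R(u_x, Ju_x)Ju_x). Then d/dt [∫ |∇_x u_x|² dx − (1/4)∫ ⟨u_x, R(u_x, Ju_x)Ju_x⟩ dx] = β ∫ ⟨R(∇_x u_x, u_x)u_x, R(u_x, Ju_x)Ju_x⟩ dx. -/
import Mathlib


open scoped RealInnerProductSpace
open Real

/-- An abstract model of the data attached to a smooth map `u : S¹ × ℝ → N` into a
Riemannian manifold: sections of the pullback bundle `u⁻¹TN` (with fibers identified with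
a fixed inner product space `V`), covariant derivatives `Dx`, `Dt`, the curvature `R` of
`N` along `u`, together with their standard properties (periodicity in `x`,
torsion-freeness, the commutation formula `∇ₜ∇ₓ − ∇ₓ∇ₜ = R(uₜ,uₓ)`, metric compatibility,
differentiation under the integral sign, and the curvature symmetries). -/
structure CovSystem (V : Type*) [NormedAddCommGroup V] [InnerProductSpace ℝ V] where
  Sec : Set (ℝ → ℝ → V)
  ux : ℝ → ℝ → V
  ut : ℝ → ℝ → V
  Dx : (ℝ → ℝ → V) → ℝ → ℝ → V
  Dt : (ℝ → ℝ → V) → ℝ → ℝ → V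
  R : ℝ → ℝ → V → V → V → V
  mem_ux : ux ∈ Sec
  mem_ut : ut ∈ Sec
  mem_Dx : ∀ s ∈ Sec, Dx s ∈ Sec
  mem_Dt : ∀ s ∈ Sec, Dt s ∈ Sec
  mem_R : ∀ a ∈ Sec, ∀ b ∈ Sec, ∀ c ∈ Sec,
    (fun t x => R t x (a t x) (b t x) (c t x)) ∈ Sec
  cont : ∀ s ∈ Sec, Continuous fun p : ℝ × ℝ => s p.1 p.2
  periodic : ∀ s ∈ Sec, ∀ t x, s t (x + 2 * π) = s t x
  torsion : Dt ux = Dx ut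
  comm : ∀ s ∈ Sec, ∀ t x,
    Dt (Dx s) t x - Dx (Dt s) t x = R t x (ut t x) (ux t x) (s t x)
  metric_x : ∀ s ∈ Sec, ∀ r ∈ Sec, ∀ t x,
    HasDerivAt (fun y => ⟪s t y, r t y⟫) (⟪Dx s t x, r t x⟫ + ⟪s t x, Dx r t x⟫) x
  metric_t : ∀ s ∈ Sec, ∀ r ∈ Sec, ∀ t x,
    HasDerivAt (fun τ => ⟪s τ x, r τ x⟫) (⟪Dt s t x, r t x⟫ + ⟪s t x, Dt r t x⟫) t
  dint : ∀ s ∈ Sec, ∀ r ∈ Sec, ∀ t,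
    HasDerivAt (fun τ => ∫ x in (0 : ℝ)..(2 * π), ⟪s τ x, r τ x⟫)
      (∫ x in (0 : ℝ)..(2 * π), (⟪Dt s t x, r t x⟫ + ⟪s t x, Dt r t x⟫)) t
  R_antisym : ∀ t x a b c, R t x a b c = -R t x b a c
  R_skew : ∀ t x a b c d, ⟪R t x a b c, d⟫ = -⟪R t x a b d, c⟫
  R_pair : ∀ t x a b c d, ⟪R t x a b c, d⟫ = ⟪R t x c d a, b⟫

/-- A `CovSystem` for a map into a Kähler manifold: in addition there is the complex
structure `J` along `u`, which is an almost-complex structure (`J² = −1`), skew-adjoint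
with respect to the metric, and parallel (`∇J = 0`, so it commutes with `Dx` and `Dt`). -/
structure KCovSystem (V : Type*) [NormedAddCommGroup V] [InnerProductSpace ℝ V]
    extends CovSystem V where
  J : ℝ → ℝ → V → V
  mem_J : ∀ s ∈ Sec, (fun t x => J t x (s t x)) ∈ Sec
  J_skew : ∀ t x v w, ⟪J t x v, w⟫ = -⟪v, J t x w⟫
  J_sq : ∀ t x v, J t x (J t x v) = -v
  J_par_x : ∀ s ∈ Sec, ∀ t x, Dx (fun t x => J t x (s t x)) t x = J t x (Dx s t x)
  J_par_t : ∀ s ∈ Sec, ∀ t x, Dt (fun t x => J t x (s t x)) t x = J t x (Dt s t x)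


section Aux
variable {V : Type*} [NormedAddCommGroup V] [InnerProductSpace ℝ V]

lemma CovSystem.contx (F : CovSystem V) {s : ℝ → ℝ → V} (hs : s ∈ F.Sec) (t : ℝ) :
    Continuous fun x => s t x :=
  (F.cont s hs).comp (continuous_const.prodMk continuous_id)

lemma CovSystem.intg (F : CovSystem V) {s r : ℝ → ℝ → V} (hs : s ∈ F.Sec) (hr : r ∈ F.Sec)
    (t : ℝ) :
    IntervalIntegrable (fun x => ⟪s t x, r t x⟫) MeasureTheory.volume 0 (2 * π) :=
  ((F.contx hs t).inner (F.contx hr t)).intervalIntegrable 0 (2 * π)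

lemma CovSystem.per_zero (F : CovSystem V) {s r : ℝ → ℝ → V} (hs : s ∈ F.Sec)
    (hr : r ∈ F.Sec) (t : ℝ) :
    ∫ x in (0:ℝ)..(2*π), (⟪F.Dx s t x, r t x⟫ + ⟪s t x, F.Dx r t x⟫) = 0 := by
  have hint : IntervalIntegrable (fun x => ⟪F.Dx s t x, r t x⟫ + ⟪s t x, F.Dx r t x⟫)
      MeasureTheory.volume 0 (2*π) :=
    (F.intg (F.mem_Dx s hs) hr t).add (F.intg hs (F.mem_Dx r hr) t)
  have hder : ∀ x ∈ Set.uIcc (0:ℝ) (2*π), HasDerivAt (fun y => ⟪s t y, r t y⟫)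
      (⟪F.Dx s t x, r t x⟫ + ⟪s t x, F.Dx r t x⟫) x := fun x _ => F.metric_x s hs r hr t x
  rw [intervalIntegral.integral_eq_sub_of_hasDerivAt hder hint]
  have h1 : s t (2*π) = s t 0 := by have := F.periodic s hs t 0; rwa [zero_add] at this
  have h2 : r t (2*π) = r t 0 := by have := F.periodic r hr t 0; rwa [zero_add] at this
  rw [h1, h2, sub_self]

lemma CovSystem.ibp (F : CovSystem V) {s r : ℝ → ℝ → V} (hs : s ∈ F.Sec) (hr : r ∈ F.Sec)
    (t : ℝ) :
    ∫ x in (0:ℝ)..(2*π), ⟪F.Dx s t x, r t x⟫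
      = - ∫ x in (0:ℝ)..(2*π), ⟪s t x, F.Dx r t x⟫ := by
  have h := F.per_zero hs hr t
  rw [intervalIntegral.integral_add (F.intg (F.mem_Dx s hs) hr t)
    (F.intg hs (F.mem_Dx r hr) t)] at h
  linarith

lemma CovSystem.R_self (F : CovSystem V) (t x : ℝ) (a b c : V) : ⟪F.R t x a b c, c⟫ = 0 := by
  have := F.R_skew t x a b c c; linarith

lemma CovSystem.R_aa (F : CovSystem V) (t x : ℝ) (a c : V) : F.R t x a a c = 0 := by
  have h := F.R_antisym t x a a c
  have h2 : F.R t x a a c + F.R t x a a c = 0 := by nth_rewrite 1 [h]; simp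
  rw [← two_smul ℝ] at h2
  simpa using (smul_eq_zero.mp h2).resolve_left (by norm_num)

lemma CovSystem.R_neg3 (F : CovSystem V) (t x : ℝ) (a b c d : V) :
    ⟪F.R t x a b (-c), d⟫ = -⟪F.R t x a b c, d⟫ := by
  have h1 := F.R_skew t x a b (-c) d
  have h2 := F.R_skew t x a b c d
  rw [inner_neg_right] at h1
  linarith

lemma KCovSystem.J_self (F : KCovSystem V) (t x : ℝ) (v : V) : ⟪F.J t x v, v⟫ = 0 := by
  have h := F.J_skew t x v v
  have h2 := real_inner_comm (F.J t x v) v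
  linarith

end Aux

section Pointwise
variable {V : Type*} [NormedAddCommGroup V] [InnerProductSpace ℝ V]

lemma CovSystem.moveR (F : CovSystem V) (t x : ℝ) (u v w : V) :
    ⟪F.R t x u v v, w⟫ = ⟪u, F.R t x w v v⟫ := by
  calc ⟪F.R t x u v v, w⟫ = ⟪F.R t x v w u, v⟫ := F.R_pair t x u v v w
  _ = -⟪F.R t x v w v, u⟫ := F.R_skew t x v w u v
  _ = ⟪u, F.R t x w v v⟫ := by
      rw [F.R_antisym t x v w v, inner_neg_left, real_inner_comm]; ring

lemma CovSystem.bTwo (F : CovSystem V) (t x : ℝ) (v w z : V) :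
    ⟪F.R t x z v v, w⟫ + ⟪F.R t x w w v, w⟫ + ⟪F.R t x w v w, w⟫ + ⟪F.R t x w v v, z⟫
      = 2 * ⟪F.R t x w v v, z⟫ := by
  have h1 : ⟪F.R t x z v v, w⟫ = ⟪F.R t x w v v, z⟫ := by
    calc ⟪F.R t x z v v, w⟫ = ⟪F.R t x v w z, v⟫ := F.R_pair t x z v v w
    _ = -⟪F.R t x v w v, z⟫ := F.R_skew t x v w z v
    _ = ⟪F.R t x w v v, z⟫ := by rw [F.R_antisym t x v w v, inner_neg_left]; ring
  have h2 : ⟪F.R t x w w v, w⟫ = 0 := by rw [F.R_aa]; simp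
  have h3 := F.R_self t x w v w
  linarith

lemma KCovSystem.fourA (F : KCovSystem V)
    (hRJ : ∀ t x a b c d, ⟪F.R t x a b c, F.J t x d⟫ = -⟪F.R t x a b (F.J t x c), d⟫)
    (t x : ℝ) (v z : V) :
    ⟪z, F.R t x v (F.J t x v) (F.J t x v)⟫
      + ⟪v, F.R t x z (F.J t x v) (F.J t x v)⟫
      + ⟪v, F.R t x v (F.J t x z) (F.J t x v)⟫
      + ⟪v, F.R t x v (F.J t x v) (F.J t x z)⟫
    = 4 * ⟪z, F.R t x v (F.J t x v) (F.J t x v)⟫ := by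
  have hA : ⟪z, F.R t x v (F.J t x v) (F.J t x v)⟫
      = ⟪F.R t x v (F.J t x v) (F.J t x v), z⟫ := real_inner_comm _ _
  have hB : ⟪v, F.R t x z (F.J t x v) (F.J t x v)⟫
      = ⟪F.R t x v (F.J t x v) (F.J t x v), z⟫ := by
    calc ⟪v, F.R t x z (F.J t x v) (F.J t x v)⟫
        = ⟪F.R t x z (F.J t x v) (F.J t x v), v⟫ := real_inner_comm _ _
    _ = ⟪F.R t x (F.J t x v) v z, F.J t x v⟫ := F.R_pair t x z (F.J t x v) (F.J t x v) v
    _ = -⟪F.R t x (F.J t x v) v (F.J t x v), z⟫ := F.R_skew t x (F.J t x v) v z (F.J t x v)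
    _ = ⟪F.R t x v (F.J t x v) (F.J t x v), z⟫ := by
        rw [F.R_antisym t x (F.J t x v) v (F.J t x v), inner_neg_left]; ring
  have hC : ⟪v, F.R t x v (F.J t x z) (F.J t x v)⟫
      = ⟪F.R t x v (F.J t x v) (F.J t x v), z⟫ := by
    calc ⟪v, F.R t x v (F.J t x z) (F.J t x v)⟫
        = ⟪F.R t x v (F.J t x z) (F.J t x v), v⟫ := real_inner_comm _ _
    _ = ⟪F.R t x (F.J t x v) v v, F.J t x z⟫ := F.R_pair t x v (F.J t x z) (F.J t x v) v
    _ = -⟪F.R t x (F.J t x v) v (F.J t x v), z⟫ := hRJ t x (F.J t x v) v v z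
    _ = ⟪F.R t x v (F.J t x v) (F.J t x v), z⟫ := by
        rw [F.R_antisym t x (F.J t x v) v (F.J t x v), inner_neg_left]; ring
  have hD : ⟪v, F.R t x v (F.J t x v) (F.J t x z)⟫
      = ⟪F.R t x v (F.J t x v) (F.J t x v), z⟫ := by
    have k1 : ⟪v, F.R t x v (F.J t x v) (F.J t x z)⟫
        = ⟪F.R t x v (F.J t x v) (F.J t x z), v⟫ := real_inner_comm _ _
    have k2 := F.R_skew t x v (F.J t x v) (F.J t x z) v
    have k3 := hRJ t x v (F.J t x v) v z
    linarith
  linarith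

lemma KCovSystem.alphaZero (F : KCovSystem V)
    (hRJ : ∀ t x a b c d, ⟪F.R t x a b c, F.J t x d⟫ = -⟪F.R t x a b (F.J t x c), d⟫)
    (t x : ℝ) (v w : V) :
    2 * ⟪F.J t x w, F.R t x w v v⟫
      + (⟪F.J t x w, F.R t x w (F.J t x v) (F.J t x v)⟫
         + ⟪F.J t x w, F.R t x v (F.J t x w) (F.J t x v)⟫
         + ⟪F.J t x w, F.R t x v (F.J t x v) (F.J t x w)⟫) = 0 := by
  have hT0 : ⟪F.J t x w, F.R t x w v v⟫ = -⟪F.R t x w v (F.J t x v), w⟫ := by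
    calc ⟪F.J t x w, F.R t x w v v⟫ = ⟪F.R t x w v v, F.J t x w⟫ := real_inner_comm _ _
    _ = -⟪F.R t x w v (F.J t x v), w⟫ := hRJ t x w v v w
  have hT1 : ⟪F.J t x w, F.R t x w (F.J t x v) (F.J t x v)⟫
      = ⟪F.R t x w (F.J t x v) v, w⟫ := by
    calc ⟪F.J t x w, F.R t x w (F.J t x v) (F.J t x v)⟫
        = ⟪F.R t x w (F.J t x v) (F.J t x v), F.J t x w⟫ := real_inner_comm _ _
    _ = -⟪F.R t x w (F.J t x v) (F.J t x (F.J t x v)), w⟫ := hRJ t x w (F.J t x v) (F.J t x v) w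
    _ = -⟪F.R t x w (F.J t x v) (-v), w⟫ := by rw [F.J_sq]
    _ = ⟪F.R t x w (F.J t x v) v, w⟫ := by rw [F.R_neg3]; ring
  have hT2 : ⟪F.J t x w, F.R t x v (F.J t x w) (F.J t x v)⟫
      = ⟪F.R t x w v (F.J t x v), w⟫ := by
    calc ⟪F.J t x w, F.R t x v (F.J t x w) (F.J t x v)⟫
        = ⟪F.R t x v (F.J t x w) (F.J t x v), F.J t x w⟫ := real_inner_comm _ _
    _ = -⟪F.R t x v (F.J t x w) (F.J t x (F.J t x v)), w⟫ := hRJ t x v (F.J t x w) (F.J t x v) w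
    _ = ⟪F.R t x v (F.J t x w) v, w⟫ := by rw [F.J_sq, F.R_neg3]; ring
    _ = ⟪F.R t x v w v, F.J t x w⟫ := F.R_pair t x v (F.J t x w) v w
    _ = -⟪F.R t x v w (F.J t x v), w⟫ := hRJ t x v w v w
    _ = ⟪F.R t x w v (F.J t x v), w⟫ := by
        rw [F.R_antisym t x v w (F.J t x v), inner_neg_left]; ring
  have hT3 : ⟪F.J t x w, F.R t x v (F.J t x v) (F.J t x w)⟫ = 0 := by
    rw [real_inner_comm]; exact F.R_self t x v (F.J t x v) (F.J t x w)
  have hS : ⟪F.R t x w (F.J t x v) v, w⟫ = ⟪F.R t x w v (F.J t x v), w⟫ := by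
    have l := F.R_skew t x w (F.J t x v) v w
    have r1 := F.R_pair t x w v (F.J t x v) w
    have r2 : F.R t x (F.J t x v) w w = - F.R t x w (F.J t x v) w :=
      F.R_antisym t x (F.J t x v) w w
    rw [l, r1, r2, inner_neg_left]
  linarith

end Pointwise


/-- On a locally Hermitian symmetric space, along any smooth solution of the
Schrödinger–Airy flow `uₜ = α J∇ₓuₓ + β(∇ₓ²uₓ + (1/2) R(uₓ, Juₓ)Juₓ)`, the functional
`E₃(u) = ∫ |∇ₓuₓ|² dx − (1/4) ∫ ⟨uₓ, R(uₓ, Juₓ)Juₓ⟩ dx` satisfies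
`dE₃/dt = β ∫ ⟨R(∇ₓuₓ, uₓ)uₓ, R(uₓ, Juₓ)Juₓ⟩ dx`. -/
theorem stmt13 {V : Type*} [NormedAddCommGroup V] [InnerProductSpace ℝ V]
    (F : KCovSystem V) (α β : ℝ)
    (hRx : ∀ a ∈ F.Sec, ∀ b ∈ F.Sec, ∀ c ∈ F.Sec, ∀ t x,
      F.Dx (fun t x => F.R t x (a t x) (b t x) (c t x)) t x
        = F.R t x (F.Dx a t x) (b t x) (c t x) + F.R t x (a t x) (F.Dx b t x) (c t x)
          + F.R t x (a t x) (b t x) (F.Dx c t x))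
    (hRt : ∀ a ∈ F.Sec, ∀ b ∈ F.Sec, ∀ c ∈ F.Sec, ∀ t x,
      F.Dt (fun t x => F.R t x (a t x) (b t x) (c t x)) t x
        = F.R t x (F.Dt a t x) (b t x) (c t x) + F.R t x (a t x) (F.Dt b t x) (c t x)
          + F.R t x (a t x) (b t x) (F.Dt c t x))
    (hRJ : ∀ t x a b c d, ⟪F.R t x a b c, F.J t x d⟫ = -⟪F.R t x a b (F.J t x c), d⟫)
    (hflow : ∀ t x, F.ut t x
      = α • F.J t x (F.Dx F.ux t x)
        + β • (F.Dx (F.Dx F.ux) t x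
          + (1 / 2 : ℝ) • F.R t x (F.ux t x) (F.J t x (F.ux t x)) (F.J t x (F.ux t x)))) :
    ∀ t : ℝ,
      HasDerivAt
        (fun τ =>
          (∫ x in (0 : ℝ)..(2 * π), ⟪F.Dx F.ux τ x, F.Dx F.ux τ x⟫)
            - (1 / 4 : ℝ) * ∫ x in (0 : ℝ)..(2 * π),
                ⟪F.ux τ x, F.R τ x (F.ux τ x) (F.J τ x (F.ux τ x)) (F.J τ x (F.ux τ x))⟫)
        (β * ∫ x in (0 : ℝ)..(2 * π),
          ⟪F.R t x (F.Dx F.ux t x) (F.ux t x) (F.ux t x),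
            F.R t x (F.ux t x) (F.J t x (F.ux t x)) (F.J t x (F.ux t x))⟫) t := by
  intro t
  have memv : F.ux ∈ F.Sec := F.mem_ux
  set v : ℝ → ℝ → V := F.ux with hv
  set w : ℝ → ℝ → V := F.Dx v with hw
  have memw : w ∈ F.Sec := F.mem_Dx v memv
  set w2 : ℝ → ℝ → V := F.Dx w with hw2
  have memw2 : w2 ∈ F.Sec := F.mem_Dx w memw
  set w3 : ℝ → ℝ → V := F.Dx w2 with hw3
  have memw3 : w3 ∈ F.Sec := F.mem_Dx w2 memw2
  set Jv : ℝ → ℝ → V := fun t x => F.J t x (v t x) with hJv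
  have memJv : Jv ∈ F.Sec := F.mem_J v memv
  set Jw : ℝ → ℝ → V := fun t x => F.J t x (w t x) with hJw
  have memJw : Jw ∈ F.Sec := F.mem_J w memw
  set Q : ℝ → ℝ → V := fun t x => F.R t x (v t x) (Jv t x) (Jv t x) with hQdef
  have memQ : Q ∈ F.Sec := F.mem_R v memv Jv memJv Jv memJv
  set DQ : ℝ → ℝ → V := F.Dx Q with hDQ
  have memDQ : DQ ∈ F.Sec := F.mem_Dx Q memQ
  set Rw : ℝ → ℝ → V := fun t x => F.R t x (w t x) (v t x) (v t x) with hRwdef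
  have memRw : Rw ∈ F.Sec := F.mem_R w memw v memv v memv
  have memut : F.ut ∈ F.Sec := F.mem_ut
  set Dut : ℝ → ℝ → V := F.Dx F.ut with hDut
  have memDut : Dut ∈ F.Sec := F.mem_Dx F.ut memut
  have htor : F.Dt v = Dut := F.torsion
  show HasDerivAt
      (fun τ => (∫ x in (0:ℝ)..(2*π), ⟪w τ x, w τ x⟫)
        - (1/4 : ℝ) * ∫ x in (0:ℝ)..(2*π), ⟪v τ x, Q τ x⟫)
      (β * ∫ x in (0:ℝ)..(2*π), ⟪Rw t x, Q t x⟫) t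
  have h1 := F.dint w memw w memw t
  have h2 := F.dint v memv Q memQ t
  have hE := h1.sub (HasDerivAt.const_mul ((1:ℝ)/4) h2)
  refine hE.congr_deriv ?_
  -- pointwise identities
  have e1 : ∀ x : ℝ, ⟪F.Dt w t x, w t x⟫ + ⟪w t x, F.Dt w t x⟫
      = 2 * ⟪F.Dx Dut t x, w t x⟫ + 2 * ⟪F.ut t x, Rw t x⟫ := by
    intro x
    have h : F.Dt w t x - F.Dx Dut t x = F.R t x (F.ut t x) (v t x) (v t x) := by
      have h0 := F.comm v memv t x
      rw [htor] at h0
      exact h0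
    have hc : F.Dt w t x = F.Dx Dut t x + F.R t x (F.ut t x) (v t x) (v t x) := by
      rw [← h]; abel
    have hm : ⟪F.R t x (F.ut t x) (v t x) (v t x), w t x⟫ = ⟪F.ut t x, Rw t x⟫ :=
      F.moveR t x (F.ut t x) (v t x) (w t x)
    have hcomm : ⟪w t x, F.Dt w t x⟫ = ⟪F.Dt w t x, w t x⟫ := real_inner_comm _ _
    rw [hcomm, hc, inner_add_left, hm]; ring
  have e2 : ∀ x : ℝ, ⟪F.Dt v t x, Q t x⟫ + ⟪v t x, F.Dt Q t x⟫
      = 4 * ⟪F.Dt v t x, Q t x⟫ := by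
    intro x
    have hJp : F.Dt Jv t x = F.J t x (F.Dt v t x) := F.J_par_t v memv t x
    have hQt : F.Dt Q t x
        = F.R t x (F.Dt v t x) (Jv t x) (Jv t x) + F.R t x (v t x) (F.Dt Jv t x) (Jv t x)
          + F.R t x (v t x) (Jv t x) (F.Dt Jv t x) := hRt v memv Jv memJv Jv memJv t x
    rw [hJp] at hQt
    have h4 : ⟪F.Dt v t x, Q t x⟫ + ⟪v t x, F.R t x (F.Dt v t x) (Jv t x) (Jv t x)⟫
        + ⟪v t x, F.R t x (v t x) (F.J t x (F.Dt v t x)) (Jv t x)⟫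
        + ⟪v t x, F.R t x (v t x) (Jv t x) (F.J t x (F.Dt v t x))⟫
        = 4 * ⟪F.Dt v t x, Q t x⟫ := F.fourA hRJ t x (v t x) (F.Dt v t x)
    rw [hQt, inner_add_right, inner_add_right]
    linarith
  -- main integral identities
  have hD1 : (∫ x in (0:ℝ)..(2*π), (⟪F.Dt w t x, w t x⟫ + ⟪w t x, F.Dt w t x⟫))
      = 2 * (∫ x in (0:ℝ)..(2*π), ⟪F.ut t x, w3 t x⟫)
        + 2 * (∫ x in (0:ℝ)..(2*π), ⟪F.ut t x, Rw t x⟫) := by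
    have hcg : (∫ x in (0:ℝ)..(2*π), (⟪F.Dt w t x, w t x⟫ + ⟪w t x, F.Dt w t x⟫))
        = ∫ x in (0:ℝ)..(2*π), (2 * ⟪F.Dx Dut t x, w t x⟫ + 2 * ⟪F.ut t x, Rw t x⟫) :=
      intervalIntegral.integral_congr (fun x _ => e1 x)
    rw [hcg, intervalIntegral.integral_add
        ((F.intg (F.mem_Dx Dut memDut) memw t).const_mul 2)
        ((F.intg memut memRw t).const_mul 2),
      intervalIntegral.integral_const_mul, intervalIntegral.integral_const_mul]
    have ibp1 : (∫ x in (0:ℝ)..(2*π), ⟪F.Dx Dut t x, w t x⟫)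
        = - ∫ x in (0:ℝ)..(2*π), ⟪Dut t x, w2 t x⟫ := F.ibp memDut memw t
    have ibp2 : (∫ x in (0:ℝ)..(2*π), ⟪Dut t x, w2 t x⟫)
        = - ∫ x in (0:ℝ)..(2*π), ⟪F.ut t x, w3 t x⟫ := F.ibp memut memw2 t
    rw [ibp1, ibp2]; ring
  have hD2 : (∫ x in (0:ℝ)..(2*π), (⟪F.Dt v t x, Q t x⟫ + ⟪v t x, F.Dt Q t x⟫))
      = 4 * ∫ x in (0:ℝ)..(2*π), ⟪Dut t x, Q t x⟫ := by
    have hcg : (∫ x in (0:ℝ)..(2*π), (⟪F.Dt v t x, Q t x⟫ + ⟪v t x, F.Dt Q t x⟫))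
        = ∫ x in (0:ℝ)..(2*π), (4 * ⟪F.Dt v t x, Q t x⟫) :=
      intervalIntegral.integral_congr (fun x _ => e2 x)
    rw [hcg, intervalIntegral.integral_const_mul, htor]
  have hI3 : (∫ x in (0:ℝ)..(2*π), ⟪Dut t x, Q t x⟫)
      = - ∫ x in (0:ℝ)..(2*π), ⟪F.ut t x, DQ t x⟫ := F.ibp memut memQ t
  -- splitting using the flow equation
  have hsplit : ∀ y : ℝ → ℝ → V, y ∈ F.Sec →
      (∫ x in (0:ℝ)..(2*π), ⟪F.ut t x, y t x⟫)
        = α * (∫ x in (0:ℝ)..(2*π), ⟪Jw t x, y t x⟫)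
          + β * (∫ x in (0:ℝ)..(2*π), ⟪w2 t x, y t x⟫)
          + (β/2) * (∫ x in (0:ℝ)..(2*π), ⟪Q t x, y t x⟫) := by
    intro y hy
    have ept : ∀ x : ℝ, ⟪F.ut t x, y t x⟫
        = α * ⟪Jw t x, y t x⟫ + β * ⟪w2 t x, y t x⟫ + (β/2) * ⟪Q t x, y t x⟫ := by
      intro x
      have hf : F.ut t x = α • Jw t x + β • (w2 t x + (1/2:ℝ) • Q t x) := hflow t x
      rw [hf]
      simp only [inner_add_left, real_inner_smul_left]
      ring
    have hcg : (∫ x in (0:ℝ)..(2*π), ⟪F.ut t x, y t x⟫)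
        = ∫ x in (0:ℝ)..(2*π),
            (α * ⟪Jw t x, y t x⟫ + β * ⟪w2 t x, y t x⟫ + (β/2) * ⟪Q t x, y t x⟫) :=
      intervalIntegral.integral_congr (fun x _ => ept x)
    rw [hcg, intervalIntegral.integral_add
        (((F.intg memJw hy t).const_mul α).add ((F.intg memw2 hy t).const_mul β))
        ((F.intg memQ hy t).const_mul (β/2)),
      intervalIntegral.integral_add ((F.intg memJw hy t).const_mul α)
        ((F.intg memw2 hy t).const_mul β),
      intervalIntegral.integral_const_mul, intervalIntegral.integral_const_mul,
      intervalIntegral.integral_const_mul]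
  -- the nine vanishing / reduction facts
  have ha1 : (∫ x in (0:ℝ)..(2*π), ⟪Jw t x, w3 t x⟫) = 0 := by
    have hz : ∀ x : ℝ, ⟪F.Dx Jw t x, w2 t x⟫ = 0 := by
      intro x
      rw [show F.Dx Jw t x = F.J t x (w2 t x) from F.J_par_x w memw t x]
      exact F.J_self t x (w2 t x)
    have h : (∫ x in (0:ℝ)..(2*π), ⟪F.Dx Jw t x, w2 t x⟫)
        = - ∫ x in (0:ℝ)..(2*π), ⟪Jw t x, w3 t x⟫ := F.ibp memJw memw2 t
    have h0 : (∫ x in (0:ℝ)..(2*π), ⟪F.Dx Jw t x, w2 t x⟫)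
        = ∫ x in (0:ℝ)..(2*π), (0:ℝ) :=
      intervalIntegral.integral_congr (fun x _ => hz x)
    rw [h0, intervalIntegral.integral_zero] at h
    linarith
  have ha3 : (∫ x in (0:ℝ)..(2*π), ⟪Jw t x, DQ t x⟫)
      = (-2) * ∫ x in (0:ℝ)..(2*π), ⟪Jw t x, Rw t x⟫ := by
    have hz : ∀ x : ℝ, ⟪Jw t x, DQ t x⟫ = (-2) * ⟪Jw t x, Rw t x⟫ := by
      intro x
      have hj : F.Dx Jv t x = F.J t x (w t x) := F.J_par_x v memv t x
      have hDQx : DQ t x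
          = F.R t x (w t x) (Jv t x) (Jv t x) + F.R t x (v t x) (F.J t x (w t x)) (Jv t x)
            + F.R t x (v t x) (Jv t x) (F.J t x (w t x)) := by
        have h := hRx v memv Jv memJv Jv memJv t x
        rw [hj] at h
        exact h
      have hz0 : 2 * ⟪Jw t x, Rw t x⟫
          + (⟪Jw t x, F.R t x (w t x) (Jv t x) (Jv t x)⟫
             + ⟪Jw t x, F.R t x (v t x) (F.J t x (w t x)) (Jv t x)⟫
             + ⟪Jw t x, F.R t x (v t x) (Jv t x) (F.J t x (w t x))⟫) = 0 :=
        F.alphaZero hRJ t x (v t x) (w t x)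
      rw [hDQx, inner_add_right, inner_add_right]
      linarith
    have hcg : (∫ x in (0:ℝ)..(2*π), ⟪Jw t x, DQ t x⟫)
        = ∫ x in (0:ℝ)..(2*π), ((-2) * ⟪Jw t x, Rw t x⟫) :=
      intervalIntegral.integral_congr (fun x _ => hz x)
    rw [hcg, intervalIntegral.integral_const_mul]
  have hb1 : (∫ x in (0:ℝ)..(2*π), ⟪w2 t x, w3 t x⟫) = 0 := by
    have h : (∫ x in (0:ℝ)..(2*π), (⟪w3 t x, w2 t x⟫ + ⟪w2 t x, w3 t x⟫)) = 0 :=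
      F.per_zero memw2 memw2 t
    have hcg : (∫ x in (0:ℝ)..(2*π), (⟪w3 t x, w2 t x⟫ + ⟪w2 t x, w3 t x⟫))
        = ∫ x in (0:ℝ)..(2*π), (2 * ⟪w2 t x, w3 t x⟫) :=
      intervalIntegral.integral_congr (fun x _ => by
        rw [real_inner_comm (w3 t x) (w2 t x)]; ring)
    rw [hcg, intervalIntegral.integral_const_mul] at h
    linarith
  have hb2 : (∫ x in (0:ℝ)..(2*π), ⟪w2 t x, Rw t x⟫) = 0 := by
    have hz : ∀ x : ℝ, ⟪F.Dx Rw t x, w t x⟫ + ⟪Rw t x, w2 t x⟫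
        = 2 * ⟪Rw t x, w2 t x⟫ := by
      intro x
      have hDRw : F.Dx Rw t x
          = F.R t x (w2 t x) (v t x) (v t x) + F.R t x (w t x) (w t x) (v t x)
            + F.R t x (w t x) (v t x) (w t x) := hRx w memw v memv v memv t x
      have hb : ⟪F.R t x (w2 t x) (v t x) (v t x), w t x⟫
          + ⟪F.R t x (w t x) (w t x) (v t x), w t x⟫
          + ⟪F.R t x (w t x) (v t x) (w t x), w t x⟫ + ⟪Rw t x, w2 t x⟫
          = 2 * ⟪Rw t x, w2 t x⟫ := F.bTwo t x (v t x) (w t x) (w2 t x)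
      rw [hDRw, inner_add_left, inner_add_left]
      linarith
    have h : (∫ x in (0:ℝ)..(2*π), (⟪F.Dx Rw t x, w t x⟫ + ⟪Rw t x, w2 t x⟫)) = 0 :=
      F.per_zero memRw memw t
    have hcg : (∫ x in (0:ℝ)..(2*π), (⟪F.Dx Rw t x, w t x⟫ + ⟪Rw t x, w2 t x⟫))
        = ∫ x in (0:ℝ)..(2*π), (2 * ⟪Rw t x, w2 t x⟫) :=
      intervalIntegral.integral_congr (fun x _ => hz x)
    rw [hcg, intervalIntegral.integral_const_mul] at h
    have hcomm : (∫ x in (0:ℝ)..(2*π), ⟪w2 t x, Rw t x⟫)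
        = ∫ x in (0:ℝ)..(2*π), ⟪Rw t x, w2 t x⟫ :=
      intervalIntegral.integral_congr (fun x _ => real_inner_comm _ _)
    rw [hcomm]
    linarith
  have hb3 : (∫ x in (0:ℝ)..(2*π), ⟪w2 t x, DQ t x⟫)
      = - ∫ x in (0:ℝ)..(2*π), ⟪Q t x, w3 t x⟫ := by
    have h : (∫ x in (0:ℝ)..(2*π), ⟪DQ t x, w2 t x⟫)
        = - ∫ x in (0:ℝ)..(2*π), ⟪Q t x, w3 t x⟫ := F.ibp memQ memw2 t
    have hcomm : (∫ x in (0:ℝ)..(2*π), ⟪w2 t x, DQ t x⟫)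
        = ∫ x in (0:ℝ)..(2*π), ⟪DQ t x, w2 t x⟫ :=
      intervalIntegral.integral_congr (fun x _ => real_inner_comm _ _)
    rw [hcomm, h]
  have hc3 : (∫ x in (0:ℝ)..(2*π), ⟪Q t x, DQ t x⟫) = 0 := by
    have h : (∫ x in (0:ℝ)..(2*π), (⟪DQ t x, Q t x⟫ + ⟪Q t x, DQ t x⟫)) = 0 :=
      F.per_zero memQ memQ t
    have hcg : (∫ x in (0:ℝ)..(2*π), (⟪DQ t x, Q t x⟫ + ⟪Q t x, DQ t x⟫))
        = ∫ x in (0:ℝ)..(2*π), (2 * ⟪Q t x, DQ t x⟫) :=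
      intervalIntegral.integral_congr (fun x _ => by
        rw [real_inner_comm (DQ t x) (Q t x)]; ring)
    rw [hcg, intervalIntegral.integral_const_mul] at h
    linarith
  have hc2 : (∫ x in (0:ℝ)..(2*π), ⟪Q t x, Rw t x⟫)
      = ∫ x in (0:ℝ)..(2*π), ⟪Rw t x, Q t x⟫ :=
    intervalIntegral.integral_congr (fun x _ => real_inner_comm _ _)
  rw [hD1, hD2, hI3, hsplit w3 memw3, hsplit Rw memRw, hsplit DQ memDQ,
    ha1, ha3, hb1, hb2, hb3, hc3, hc2]
  ring
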